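/- Let R be a discrete valuation ring with field of fractions L, valuation v, and 2 invertible. Let F ∈ R[x] have degree at most 6 with all coefficients in R. Suppose a_0, a_1 ∈ R and b_0, b_1 ∈ L are such that x² + a_1 x + a_0 divides F(x) - (b_1 x + b_0)² in L[x], and not both b_0 and b_1 lie in R. Then v(b_1) < 0 and π² divides the discriminant a_1² - 4a_0 of x² + a_1 x + a_0, where π is a uniformizer. -/

import Mathlib

open Polynomial in
theorem stmt_10 {R L : Type*} [CommRing R] [IsDomain R] [IsDiscreteValuationRing R]
    [Field L] [Algebra R L] [IsFractionRing R L]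
    (π : R) (hπ : Irreducible π) (h2 : IsUnit (2 : R))
    (F : R[X]) (hF : F.natDegree ≤ 6)
    (a0 a1 : R) (b0 b1 : L)
    (hdiv : (X ^ 2 + C (algebraMap R L a1) * X + C (algebraMap R L a0)) ∣
      (F.map (algebraMap R L) - (C b1 * X + C b0) ^ 2))
    (hb : ¬ (IsLocalization.IsInteger R b0 ∧ IsLocalization.IsInteger R b1)) :
    ¬ IsLocalization.IsInteger R b1 ∧ π ^ 2 ∣ (a1 ^ 2 - 4 * a0) := by
  set f := algebraMap R L with hf
  have finj : Function.Injective f := IsFractionRing.injective R L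
  -- the quadratic over R
  obtain ⟨A, hA⟩ : ∃ A : R[X], A = X ^ 2 + (C a1 * X + C a0) := ⟨_, rfl⟩
  have hAm : A.Monic := by
    rw [hA]; exact monic_X_pow_add (lt_of_le_of_lt degree_linear_le (by norm_num))
  have hAdeg : A.degree = 2 := by
    rw [hA]
    rw [degree_add_eq_left_of_degree_lt]
    · exact degree_X_pow 2
    · exact lt_of_le_of_lt degree_linear_le (by rw [degree_X_pow]; norm_num)
  have hAnat : A.natDegree = 2 := natDegree_eq_of_degree_eq_some hAdeg
  have hAmap : A.map f = X ^ 2 + C (f a1) * X + C (f a0) := by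
    rw [hA]
    simp only [Polynomial.map_add, Polynomial.map_mul, Polynomial.map_pow,
      Polynomial.map_X, Polynomial.map_C]
    ring
  obtain ⟨r, hrr⟩ : ∃ r : R[X], r = F %ₘ A := ⟨_, rfl⟩
  have hrdeg : r.degree < 2 := by rw [hrr, ← hAdeg]; exact degree_modByMonic_lt F hAm
  have hrnat : r.natDegree ≤ 1 := by
    rcases eq_or_ne r 0 with h | h
    · simp [h]
    · have := (degree_eq_natDegree h) ▸ hrdeg
      exact_mod_cast Nat.lt_succ_iff.mp (by exact_mod_cast this)
  -- divisibility of the remainder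
  have hAd : (A.map f) ∣ (r.map f - (C b1 * X + C b0) ^ 2) := by
    have h2' : r.map f + A.map f * ((F /ₘ A).map f) = F.map f := by
      rw [hrr, ← Polynomial.map_mul, ← Polynomial.map_add, modByMonic_add_div F A]
    have h1 : r.map f - (C b1 * X + C b0) ^ 2 =
        (F.map f - (C b1 * X + C b0) ^ 2) - A.map f * ((F /ₘ A).map f) := by
      rw [← h2']; ring
    rw [h1]
    refine dvd_sub ?_ (Dvd.intro _ rfl)
    rwa [hAmap]
  obtain ⟨t, ht⟩ := hAd
  -- t is a constant
  obtain ⟨c, hc⟩ : ∃ c : L, t = C c := by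
    rcases eq_or_ne t 0 with h | h
    · exact ⟨0, by simp [h]⟩
    · have hAm' : (A.map f).Monic := hAm.map f
      have hnd : (A.map f * t).natDegree = 2 + t.natDegree := by
        rw [natDegree_mul hAm'.ne_zero h, hAm.natDegree_map, hAnat]
      have hle : (r.map f - (C b1 * X + C b0) ^ 2).natDegree ≤ 2 := by
        refine le_trans (natDegree_sub_le _ _) (max_le ?_ ?_)
        · exact le_trans natDegree_map_le (le_trans hrnat (by norm_num))
        · exact le_trans natDegree_pow_le (by
            have := natDegree_linear_le (a := b1) (b := b0); omega)
      rw [ht] at hle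
      exact ⟨t.coeff 0, eq_C_of_natDegree_eq_zero (by omega)⟩
  rw [hc] at ht
  -- expand the key polynomial identity
  have hB : (C b1 * X + C b0) ^ 2 =
      C (b1 ^ 2) * X ^ 2 + C (2 * b0 * b1) * X + C (b0 ^ 2) := by
    simp only [map_pow, map_mul, map_add, map_ofNat]
    ring
  have htt : r.map f = C (b1 ^ 2 + c) * X ^ 2 + C (2 * b0 * b1 + f a1 * c) * X +
      C (b0 ^ 2 + f a0 * c) := by
    rw [sub_eq_iff_eq_add] at ht
    rw [ht, hAmap, hB]
    simp only [map_add, map_mul, map_pow, map_ofNat]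
    ring
  have c2 : f (r.coeff 2) = b1 ^ 2 + c := by
    have h := congrArg (fun p => Polynomial.coeff p 2) htt
    simp only [coeff_map, coeff_add, coeff_C_mul, coeff_X_pow, coeff_X, coeff_C] at h
    norm_num at h
    exact h
  have c1 : f (r.coeff 1) = 2 * b0 * b1 + f a1 * c := by
    have h := congrArg (fun p => Polynomial.coeff p 1) htt
    simp only [coeff_map, coeff_add, coeff_C_mul, coeff_X_pow, coeff_X, coeff_C] at h
    norm_num at h
    exact h
  have c0 : f (r.coeff 0) = b0 ^ 2 + f a0 * c := by
    have h := congrArg (fun p => Polynomial.coeff p 0) htt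
    simp only [coeff_map, coeff_add, coeff_C_mul, coeff_X_pow, coeff_X, coeff_C] at h
    norm_num at h
    exact h
  have hr2 : r.coeff 2 = 0 := coeff_eq_zero_of_degree_lt (by exact_mod_cast hrdeg)
  rw [hr2, map_zero] at c2
  have hcc : c = -b1 ^ 2 := by linear_combination -c2
  obtain ⟨α1, hα1⟩ : ∃ z : R, z = r.coeff 1 := ⟨_, rfl⟩
  obtain ⟨α0, hα0⟩ : ∃ z : R, z = r.coeff 0 := ⟨_, rfl⟩
  have hA1 : f α1 = 2 * b0 * b1 - f a1 * b1 ^ 2 := by rw [hα1, c1, hcc]; ring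
  have hA0 : f α0 = b0 ^ 2 - f a0 * b1 ^ 2 := by rw [hα0, c0, hcc]; ring
  -- Part 1 : b1 is not integral
  have H1 : ¬ IsLocalization.IsInteger R b1 := by
    rintro ⟨β, hβ⟩
    have hsq : b0 ^ 2 = f (α0 + a0 * β ^ 2) := by
      rw [map_add, map_mul, map_pow, hβ, hA0]; ring
    have hint : IsIntegral R b0 := by
      refine ⟨X ^ 2 - C (α0 + a0 * β ^ 2), monic_X_pow_sub_C _ (by norm_num), ?_⟩
      simp [hsq, hf]
    obtain ⟨β0, hβ0⟩ := IsIntegrallyClosed.isIntegral_iff.mp hint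
    exact hb ⟨⟨β0, hβ0⟩, ⟨β, hβ⟩⟩
  refine ⟨H1, ?_⟩
  -- Part 2
  have hb1ne : b1 ≠ 0 := fun h => H1 ⟨0, by simp [h]⟩
  obtain ⟨x, y, hy, hxy⟩ := IsFractionRing.div_surjective (A := R) b1
  have hy0 : y ≠ 0 := nonZeroDivisors.ne_zero hy
  have hfy : f y ≠ 0 := fun h => hy0 (finj (by simpa using h))
  have hx0 : x ≠ 0 := by
    rintro rfl
    rw [map_zero, zero_div] at hxy
    exact hb1ne hxy.symm
  obtain ⟨i, u, hxu⟩ := IsDiscreteValuationRing.eq_unit_mul_pow_irreducible hx0 hπ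
  obtain ⟨j, v, hyv⟩ := IsDiscreteValuationRing.eq_unit_mul_pow_irreducible hy0 hπ
  have hv : ((↑v⁻¹ : R) * ↑v) = 1 := by exact_mod_cast v.inv_mul
  by_cases hij : j ≤ i
  · -- then b1 would be integral, contradiction
    exfalso
    apply H1
    refine ⟨↑u * ↑v⁻¹ * π ^ (i - j), ?_⟩
    rw [← hxy, eq_div_iff hfy, ← map_mul]
    congr 1
    rw [hxu, hyv]
    have hpow : π ^ (i - j) * π ^ j = π ^ i := by rw [← pow_add]; congr 1; omega
    rw [← hpow]
    linear_combination ((↑u : R) * π ^ (i - j) * π ^ j) * hv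
  · push_neg at hij  -- i < j
    obtain ⟨m, hm⟩ : ∃ m, j - i = m + 1 := ⟨j - i - 1, by omega⟩
    obtain ⟨wR, hwR⟩ : ∃ z : R, z = ↑(u * v⁻¹) := ⟨_, rfl⟩
    have hwu : IsUnit wR := by rw [hwR]; exact (u * v⁻¹).isUnit
    have hw : b1 * f π ^ (j - i) = f wR := by
      rw [← hxy, div_mul_eq_mul_div, div_eq_iff hfy, ← map_pow, ← map_mul, ← map_mul]
      congr 1
      rw [hwR, hxu, hyv, Units.val_mul]
      have hpow : π ^ i * π ^ (j - i) = π ^ j := by rw [← pow_add]; congr 1; omega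
      rw [← hpow]
      linear_combination (-((↑u : R) * π ^ i * π ^ (j - i))) * hv
    obtain ⟨e, he⟩ : ∃ z : R, z = α1 * ↑((u * v⁻¹)⁻¹) := ⟨_, rfl⟩
    obtain ⟨d, hd'⟩ : ∃ z : R, z = e * π ^ (j - i) := ⟨_, rfl⟩
    have hvu : ((↑(u * v⁻¹)⁻¹ : R) * ↑(u * v⁻¹)) = 1 := by
      exact_mod_cast (u * v⁻¹).inv_mul
    have hd : b1 * f d = f α1 := by
      calc b1 * f d = f e * (b1 * f π ^ (j - i)) := by rw [hd', map_mul, map_pow]; ring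
        _ = f e * f wR := by rw [hw]
        _ = f α1 := by
            rw [← map_mul]
            congr 1
            rw [he, hwR]
            linear_combination α1 * hvu
    have hd2 : f d = 2 * b0 - b1 * f a1 := by
      apply mul_left_cancel₀ hb1ne
      rw [hd, hA1]; ring
    have key : f (4 * α0 * π ^ (2 * (j - i))) =
        f (π ^ (2 * (j - i)) * d ^ 2 + 2 * d * a1 * π ^ (j - i) * wR +
          wR ^ 2 * (a1 ^ 2 - 4 * a0)) := by
      simp only [map_mul, map_add, map_sub, map_pow, map_ofNat]
      rw [hA0, hd2, ← hw]
      ring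
    have keyR : 4 * α0 * π ^ (2 * (j - i)) =
        π ^ (2 * (j - i)) * d ^ 2 + 2 * d * a1 * π ^ (j - i) * wR +
          wR ^ 2 * (a1 ^ 2 - 4 * a0) := finj key
    rw [hd', hm] at keyR
    have h5 : wR ^ 2 * (a1 ^ 2 - 4 * a0) =
        π ^ 2 * (4 * α0 * π ^ (2 * m) - π ^ (2 * m) * (e * π ^ (m + 1)) ^ 2 -
          2 * e * a1 * π ^ (2 * m) * wR) := by
      linear_combination -keyR
    exact ((hwu.pow 2).dvd_mul_left).mp ⟨_, h5⟩
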